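/- Let n ≥ 5. For each 1 ≤ k ≤ n−4, the function χ_k defined on the open set U = {x ∈ ℝ^{n−1} : ξ_1(x) > 0} by χ_k(x) = ξ_{k+1}(x) · ξ_1(x)^{−(k+2)/2} (using the real power function) satisfies both partial differential equations Σ_{j=1}^{n−1} (n−1−j) x_j · ∂χ_k/∂x_j = 0 and Σ_{j=1}^{n−1} x_j · ∂χ_k/∂x_j = 0 on U. (These are the n−4 functionally independent generalized Casimir invariants of the solvable Lie algebra s_{n+2}.) -/

import Mathlib

open MvPolynomial in
/-- The polynomial invariants `ξ_k` of the coadjoint representation of `n_{n,1}`: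
`ξ_0 = x 1` and, for `k ≥ 1`,
`ξ_k = ((-1)^k k/(k+1)!) x_2^{k+1} + Σ_{j=0}^{k-1} ((-1)^j/j!) x_2^j x_{k+2-j} x_1^{k-j}`
(so `ξ_1 = -x_2²/2 + x_1 x_3`). -/
noncomputable def xi (F : Type*) [Field F] : ℕ → MvPolynomial ℕ F
  | 0 => X 1
  | k + 1 =>
      C ((-1 : F) ^ (k + 1) * ((k + 1 : ℕ) : F) / (((k + 2).factorial : ℕ) : F)) *
          X 2 ^ (k + 2) +
        ∑ j ∈ Finset.range (k + 1),
          C ((-1 : F) ^ j / ((j.factorial : ℕ) : F)) * X 2 ^ j *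
            X (k + 3 - j) * X 1 ^ (k + 1 - j)

/-- The `1`-based coordinates of a point `x ∈ ℝ^{n-1}`: `coords n x i = x_i` for
`1 ≤ i ≤ n-1` and `0` otherwise. -/
noncomputable def coords (n : ℕ) (x : Fin (n - 1) → ℝ) : ℕ → ℝ :=
  fun i => if h : 1 ≤ i ∧ i ≤ n - 1 then x ⟨i - 1, by omega⟩ else 0

/-- The `j`-th coordinate unit vector of `ℝ^{n-1}` (`1`-based). -/
noncomputable def unitv (n : ℕ) (j : ℕ) : Fin (n - 1) → ℝ :=
  fun i => if i.val + 1 = j then 1 else 0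

/-- The generalized Casimir invariants of the solvable Lie algebra `s_{n+2}`:
`χ_k = ξ_{k+1} · ξ_1^{-(k+2)/2}` (real power), defined on `{x : ξ_1(x) > 0}`. -/
noncomputable def chiS (n : ℕ) (k : ℕ) (x : Fin (n - 1) → ℝ) : ℝ :=
  MvPolynomial.eval (coords n x) (xi ℝ (k + 1)) *
    (MvPolynomial.eval (coords n x) (xi ℝ 1)) ^ (-(((k + 2 : ℕ) : ℝ) / 2))

open MvPolynomial


lemma coords_diff (n i : ℕ) : Differentiable ℝ (fun x : Fin (n-1) → ℝ => coords n x i) := by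
  unfold coords
  by_cases h : 1 ≤ i ∧ i ≤ n - 1
  · simp only [h, dif_pos]
    exact (ContinuousLinearMap.proj (R := ℝ) (φ := fun _ : Fin (n-1) => ℝ)
      ⟨i - 1, by omega⟩).differentiable
  · simp only [h, dif_neg, not_false_iff]
    exact differentiable_const 0

lemma eval_coords_diff (n : ℕ) (p : MvPolynomial ℕ ℝ) :
    Differentiable ℝ (fun x : Fin (n-1) → ℝ => eval (coords n x) p) := by
  induction p using MvPolynomial.induction_on with
  | C a => simpa using differentiable_const a
  | add p q hp hq => simp only [eval_add]; exact hp.add hq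
  | mul_X p i hp => simp only [eval_mul, eval_X]; exact hp.mul (coords_diff n i)
lemma xi_homog (k : ℕ) (w : ℕ → ℕ) (d : ℕ) (h2 : (k+2) * w 2 = d)
    (hterm : ∀ j ≤ k, j * w 2 + w (k+3-j) + (k+1-j) * w 1 = d)
    (l : ℝ) (y : ℕ → ℝ) :
    eval (fun j => l ^ w j * y j) (xi ℝ (k+1)) = l ^ d * eval y (xi ℝ (k+1)) := by
  simp only [xi, eval_add, eval_mul, eval_pow, eval_C, eval_X, map_sum]
  rw [mul_add, Finset.mul_sum]
  congr 1
  · rw [mul_pow, ← pow_mul, mul_comm (w 2), h2]; ring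
  · refine Finset.sum_congr rfl fun j hj => ?_
    have hj' : j ≤ k := by simpa [Nat.lt_succ_iff] using Finset.mem_range.mp hj
    rw [mul_pow, mul_pow, ← pow_mul, ← pow_mul, ← hterm j hj']
    ring
lemma coords_scale (n : ℕ) (w : ℕ → ℕ) (l : ℝ) (x : Fin (n-1) → ℝ) :
    coords n (fun i => l ^ w (i.val + 1) * x i) = fun j => l ^ w j * coords n x j := by
  funext j
  unfold coords
  by_cases h : 1 ≤ j ∧ j ≤ n - 1
  · rw [dif_pos h, dif_pos h]
    show l ^ w (j - 1 + 1) * _ = _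
    rw [show j - 1 + 1 = j from by omega]
  · simp [h]

lemma coords_apply (n : ℕ) (x : Fin (n-1) → ℝ) (i : Fin (n-1)) :
    coords n x (i.val + 1) = x i := by
  unfold coords
  rw [dif_pos ⟨by omega, by omega⟩]
  congr 1

lemma chiS_scale (n k : ℕ) (w : ℕ → ℕ) (d D : ℕ) (hD : 2 * D = (k + 2) * d)
    (hom1 : ∀ (l : ℝ) (y : ℕ → ℝ),
      eval (fun j => l ^ w j * y j) (xi ℝ 1) = l ^ d * eval y (xi ℝ 1))
    (homk : ∀ (l : ℝ) (y : ℕ → ℝ),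
      eval (fun j => l ^ w j * y j) (xi ℝ (k+1)) = l ^ D * eval y (xi ℝ (k+1)))
    (x : Fin (n-1) → ℝ) (hx : 0 < eval (coords n x) (xi ℝ 1))
    (l : ℝ) (hl : 0 < l) :
    chiS n k (fun i => l ^ w (i.val + 1) * x i) = chiS n k x := by
  unfold chiS
  rw [coords_scale, hom1, homk]
  set P := eval (coords n x) (xi ℝ (k+1))
  set Q := eval (coords n x) (xi ℝ 1)
  have hld : (0:ℝ) ≤ l ^ d := by positivity
  rw [Real.mul_rpow hld hx.le]
  have h1 : ((l ^ d : ℝ)) ^ (-(((k + 2 : ℕ) : ℝ) / 2)) = l ^ (-(D:ℝ)) := by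
    rw [← Real.rpow_natCast l d, ← Real.rpow_mul hl.le]
    congr 1
    have hr : 2 * (D:ℝ) = ((k:ℝ) + 2) * d := by exact_mod_cast hD
    push_cast
    linarith
  rw [h1]
  have h2 : (l:ℝ) ^ D * l ^ (-(D:ℝ)) = 1 := by
    rw [← Real.rpow_natCast l D, ← Real.rpow_add hl]
    simp
  calc l ^ D * P * (l ^ (-(D:ℝ)) * Q ^ (-(((k + 2 : ℕ) : ℝ) / 2)))
      = (l ^ D * l ^ (-(D:ℝ))) * (P * Q ^ (-(((k + 2 : ℕ) : ℝ) / 2))) := by ring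
    _ = P * Q ^ (-(((k + 2 : ℕ) : ℝ) / 2)) := by rw [h2, one_mul]

lemma chiS_diff (n k : ℕ) (x : Fin (n-1) → ℝ)
    (hx : 0 < eval (coords n x) (xi ℝ 1)) :
    DifferentiableAt ℝ (chiS n k) x := by
  exact ((eval_coords_diff n (xi ℝ (k+1))).differentiableAt).mul
    (((eval_coords_diff n (xi ℝ 1)).differentiableAt).rpow_const (Or.inl hx.ne'))

lemma chiS_fderiv_zero (n k : ℕ) (w : ℕ → ℕ) (d D : ℕ) (hD : 2 * D = (k + 2) * d)
    (hom1 : ∀ (l : ℝ) (y : ℕ → ℝ),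
      eval (fun j => l ^ w j * y j) (xi ℝ 1) = l ^ d * eval y (xi ℝ 1))
    (homk : ∀ (l : ℝ) (y : ℕ → ℝ),
      eval (fun j => l ^ w j * y j) (xi ℝ (k+1)) = l ^ D * eval y (xi ℝ (k+1)))
    (x : Fin (n-1) → ℝ) (hx : 0 < eval (coords n x) (xi ℝ 1)) :
    fderiv ℝ (chiS n k) x (fun i => (w (i.val + 1) : ℝ) * x i) = 0 := by
  have hdiff : DifferentiableAt ℝ (chiS n k) x := chiS_diff n k x hx
  set c : ℝ → (Fin (n-1) → ℝ) := fun l i => l ^ w (i.val+1) * x i with hc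
  have hc1 : c 1 = x := by funext i; simp [hc]
  have hder : HasDerivAt c (fun i => (w (i.val+1) : ℝ) * x i) 1 := by
    apply hasDerivAt_pi.2
    intro i
    simpa using (hasDerivAt_pow (w (i.val+1)) (1:ℝ)).mul_const (x i)
  have hcomp : HasDerivAt (chiS n k ∘ c)
      (fderiv ℝ (chiS n k) x (fun i => (w (i.val+1):ℝ) * x i)) 1 := by
    have h : HasFDerivAt (chiS n k) (fderiv ℝ (chiS n k) x) (c 1) := by
      rw [hc1]; exact hdiff.hasFDerivAt
    exact h.comp_hasDerivAt 1 hder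
  have hev : (chiS n k ∘ c) =ᶠ[nhds (1:ℝ)] fun _ => chiS n k x := by
    filter_upwards [eventually_gt_nhds (show (0:ℝ) < 1 by norm_num)] with l hl
    exact chiS_scale n k w d D hD hom1 homk x hx l hl
  have hconst : HasDerivAt (chiS n k ∘ c) 0 1 :=
    (hasDerivAt_const (1:ℝ) (chiS n k x)).congr_of_eventuallyEq hev
  exact hcomp.unique hconst
lemma sum_smul_unitv (n : ℕ) (c : ℕ → ℝ) :
    (∑ j ∈ Finset.Icc 1 (n-1), c j • unitv n j) = fun i : Fin (n-1) => c (i.val + 1) := by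
  funext i
  rw [Finset.sum_apply]
  rw [Finset.sum_eq_single (i.val + 1)]
  · simp [unitv]
  · intro j _ hne
    simp only [Pi.smul_apply, unitv, smul_eq_mul]
    rw [if_neg (fun h => hne h.symm), mul_zero]
  · intro h
    exact absurd (Finset.mem_Icc.mpr ⟨by omega, by omega⟩) h

lemma sum_eq_fderiv (n k : ℕ) (x : Fin (n-1) → ℝ) (c : ℕ → ℝ) :
    ∑ j ∈ Finset.Icc 1 (n-1), c j * fderiv ℝ (chiS n k) x (unitv n j)
      = fderiv ℝ (chiS n k) x (fun i : Fin (n-1) => c (i.val + 1)) := by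
  rw [← sum_smul_unitv n c, map_sum]
  exact Finset.sum_congr rfl fun j _ => by rw [ContinuousLinearMap.map_smul, smul_eq_mul]

/-- For `n ≥ 5` and `1 ≤ k ≤ n-4`, the function
`χ_k = ξ_{k+1} · ξ_1^{-(k+2)/2}` satisfies both
`Σ_{j=1}^{n-1} (n-1-j) x_j ∂χ_k/∂x_j = 0` and `Σ_{j=1}^{n-1} x_j ∂χ_k/∂x_j = 0`
on the open set `{x : ξ_1(x) > 0}`: these are the `n-4` generalized Casimir
invariants of the solvable Lie algebra `s_{n+2}`. -/
theorem chiS_invariant (n : ℕ) (hn : 5 ≤ n)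
    (k : ℕ) (hk1 : 1 ≤ k) (hk2 : k ≤ n - 4)
    (x : Fin (n - 1) → ℝ) (hx : 0 < MvPolynomial.eval (coords n x) (xi ℝ 1)) :
    DifferentiableAt ℝ (chiS n k) x ∧
    (∑ j ∈ Finset.Icc 1 (n - 1),
        ((n - 1 - j : ℕ) : ℝ) * coords n x j * fderiv ℝ (chiS n k) x (unitv n j) = 0) ∧
    (∑ j ∈ Finset.Icc 1 (n - 1),
        coords n x j * fderiv ℝ (chiS n k) x (unitv n j) = 0) := by
  refine ⟨chiS_diff n k x hx, ?_, ?_⟩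
  · -- weight w j = n - 1 - j
    set w : ℕ → ℕ := fun j => n - 1 - j with hw
    have hom1 : ∀ (l : ℝ) (y : ℕ → ℝ),
        eval (fun j => l ^ w j * y j) (xi ℝ 1) = l ^ (2*(n-3)) * eval y (xi ℝ 1) := by
      intro l y
      exact xi_homog 0 w (2*(n-3)) (by simp [hw]; omega)
        (fun j hj => by interval_cases j; simp only [hw]; omega) l y
    have homk : ∀ (l : ℝ) (y : ℕ → ℝ),
        eval (fun j => l ^ w j * y j) (xi ℝ (k+1)) = l ^ ((k+2)*(n-3)) * eval y (xi ℝ (k+1)) := by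
      intro l y
      refine xi_homog k w ((k+2)*(n-3)) ?_ ?_ l y
      · simp only [hw]
        rw [show n - 1 - 2 = n - 3 from by omega]
      · intro j hj
        simp only [hw]
        rw [show n - 1 - 2 = n - 3 from by omega, show n - 1 - 1 = n - 2 from by omega,
          show n - 1 - (k + 3 - j) = n - 4 - k + j from by omega]
        zify [show 3 ≤ n from by omega, show 2 ≤ n from by omega, show 4 ≤ n from by omega,
          show k ≤ n - 4 from hk2, show j ≤ k + 1 from by omega]
        ring
    have hz := chiS_fderiv_zero n k w (2*(n-3)) ((k+2)*(n-3)) (by ring) hom1 homk x hx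
    rw [show ∑ j ∈ Finset.Icc 1 (n - 1),
        ((n - 1 - j : ℕ) : ℝ) * coords n x j * fderiv ℝ (chiS n k) x (unitv n j)
      = ∑ j ∈ Finset.Icc 1 (n - 1),
        (fun j => ((n - 1 - j : ℕ) : ℝ) * coords n x j) j * fderiv ℝ (chiS n k) x (unitv n j) from rfl,
      sum_eq_fderiv n k x]
    rw [show (fun i : Fin (n-1) => (fun j => ((n - 1 - j : ℕ) : ℝ) * coords n x j) (i.val + 1))
        = fun i : Fin (n-1) => (w (i.val + 1) : ℝ) * x i from by
      funext i
      show ((n - 1 - (i.val+1) : ℕ) : ℝ) * coords n x (i.val+1) = (w (i.val+1) : ℝ) * x i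
      rw [coords_apply, hw]]
    exact hz
  · -- weight w j = 1
    have hom1 : ∀ (l : ℝ) (y : ℕ → ℝ),
        eval (fun j => l ^ (fun _ : ℕ => 1) j * y j) (xi ℝ 1) = l ^ 2 * eval y (xi ℝ 1) :=
      fun l y => xi_homog 0 (fun _ => 1) 2 (by norm_num) (fun j hj => by show j*1+1+(0+1-j)*1 = 2; omega) l y
    have homk : ∀ (l : ℝ) (y : ℕ → ℝ),
        eval (fun j => l ^ (fun _ : ℕ => 1) j * y j) (xi ℝ (k+1)) = l ^ (k+2) * eval y (xi ℝ (k+1)) :=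
      fun l y => xi_homog k (fun _ => 1) (k+2) (by norm_num) (fun j hj => by show j*1+1+(k+1-j)*1 = k+2; omega) l y
    have hz := chiS_fderiv_zero n k (fun _ => 1) 2 (k+2) (by ring) hom1 homk x hx
    rw [show ∑ j ∈ Finset.Icc 1 (n - 1),
        coords n x j * fderiv ℝ (chiS n k) x (unitv n j)
      = ∑ j ∈ Finset.Icc 1 (n - 1),
        (fun j => coords n x j) j * fderiv ℝ (chiS n k) x (unitv n j) from rfl,
      sum_eq_fderiv n k x]
    rw [show (fun i : Fin (n-1) => (fun j => coords n x j) (i.val + 1))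
        = fun i : Fin (n-1) => ((1:ℕ) : ℝ) * x i from by
      funext i
      show coords n x (i.val+1) = ((1:ℕ):ℝ) * x i
      rw [coords_apply]; simp]
    exact hz
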